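/- arXiv:2409.14991 — 2 statements merged into one kernel-verified Lean document; each statement's English description precedes it below -/
import Mathlib

section
/- Fix d ≥ 2, m ≥ 3, x* = 1, and e ∈ ℤ_d. Every no-signaling behavior p ∈ NS(d,d,m,m) whose marginal on input x* is the deterministic point distribution at e admits a decomposition of its chain-relevant probabilities as p = Σ_{q ∈ ℤ_d^{2m-1}} p(q)·P_q on the input pairs of the chain, where p(q) ≥ 0, Σ_q p(q) = 1, and each P_q is a valid behavior satisfying P_q(A_i - B_i = q_{2i-1}) = 1 and P_q(B_i - A_{i+1} = q_{2i}) = 1 for all i, with q_{2m} := -(q_1 + ... + q_{2m-1}) - 1 (mod d). Consequently, p cannot violate any chain inequality: I_{d,m}(p) ≤ I_{d,m}^C. -/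
open scoped BigOperators

/-- The chain Bell value `I_{d,m}` of a behavior `p(a,b|x,y)` (inputs `0,...,m-1`
standing for `1,...,m`), with the convention `A_{m+1} = A_1 + 1`:
`I = Σ_k α_k Σ_i [p(A_i - B_i = k) + p(B_i - A_{i+1} = k)]`, where
`p(A_x - B_y = k) = Σ_j p(j+k, j | x, y)` and the term for `i = m` uses inputs `(1,m)`
with shift `-k-1`. -/
noncomputable def chainValue (d m : ℕ) [NeZero d] [NeZero m] (α : ZMod d → ℝ)
    (p : Fin m → Fin m → ZMod d → ZMod d → ℝ) : ℝ :=
  ∑ k : ZMod d, α k * ∑ i : Fin m,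
    ((∑ j : ZMod d, p i i (j + k) j) +
      (if i.val = m - 1 then ∑ j : ZMod d, p 0 i (j + (-k - 1)) j
       else ∑ j : ZMod d, p (i + 1) i (j + (-k)) j))

/-- The classical (local) bound of the chain inequality:
`max { Σ_{i=1}^{2m} α_{q_i} : q ∈ ℤ_d^{2m}, Σ_i q_i ≡ -1 (mod d) }`. -/
noncomputable def classicalBound (d m : ℕ) [NeZero d] (α : ZMod d → ℝ) : ℝ :=
  sSup {S : ℝ | ∃ q : Fin (2 * m) → ZMod d, (∑ i, q i) = -1 ∧ S = ∑ i, α (q i)}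

section Machinery

variable {d : ℕ} [NeZero d]

/-- extend a finite tuple by zero -/
def qext {N : ℕ} (q : Fin N → ZMod d) (c : ℕ) : ZMod d :=
  if h : c < N then q ⟨c, h⟩ else 0

/-- the chain path determined by start `e` and difference tuple `q` -/
def cpath (e : ZMod d) {N : ℕ} (q : Fin N → ZMod d) (c : ℕ) : ZMod d :=
  e - ∑ c' ∈ Finset.range c, qext q c'

lemma cpath_zero (e : ZMod d) {N : ℕ} (q : Fin N → ZMod d) : cpath e q 0 = e := by
  simp [cpath]

lemma cpath_succ (e : ZMod d) {N : ℕ} (q : Fin N → ZMod d) (c : ℕ) :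
    cpath e q (c + 1) = cpath e q c - qext q c := by
  simp [cpath, Finset.sum_range_succ, sub_sub]

lemma qext_cons_zero {N : ℕ} (q0 : ZMod d) (rest : Fin N → ZMod d) :
    qext (Fin.cons q0 rest) 0 = q0 := by
  simp [qext, Fin.mk_zero]

lemma qext_cons_succ {N : ℕ} (q0 : ZMod d) (rest : Fin N → ZMod d) (c : ℕ) :
    qext (Fin.cons q0 rest) (c + 1) = qext rest c := by
  unfold qext
  by_cases h : c < N
  · rw [dif_pos (by omega : c + 1 < N + 1), dif_pos h]
    exact Fin.cons_succ (α := fun _ => ZMod d) q0 rest ⟨c, h⟩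
  · rw [dif_neg (by omega), dif_neg h]

lemma cpath_cons (e : ZMod d) {N : ℕ} (q0 : ZMod d) (rest : Fin N → ZMod d) (c : ℕ) :
    cpath e (Fin.cons q0 rest) (c + 1) = cpath (e - q0) rest c := by
  unfold cpath
  rw [Finset.sum_range_succ']
  simp only [qext_cons_succ, qext_cons_zero]
  ring

/-- the weight of a tuple: product of transition kernel values along the path -/
noncomputable def Wgt (step : ℕ → ZMod d → ZMod d → ℝ) (k : ℕ) (e : ZMod d) {N : ℕ}
    (q : Fin N → ZMod d) : ℝ :=
  ∏ c ∈ Finset.range N, step (k + c) (cpath e q c) (cpath e q (c + 1))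

lemma Wgt_cons (step : ℕ → ZMod d → ZMod d → ℝ) (k : ℕ) (e : ZMod d) {N : ℕ}
    (q0 : ZMod d) (rest : Fin N → ZMod d) :
    Wgt step k e (Fin.cons q0 rest) = step k e (e - q0) * Wgt step (k + 1) (e - q0) rest := by
  unfold Wgt
  rw [Finset.prod_range_succ']
  rw [mul_comm]
  congr 1
  · rw [cpath_zero, cpath_cons, cpath_zero]
    norm_num
  · apply Finset.prod_congr rfl
    intro c _
    rw [cpath_cons, cpath_cons]
    have h2 : k + (c + 1) = k + 1 + c := by omega
    rw [h2]

/-- n-step transition function -/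
noncomputable def nuF (step : ℕ → ZMod d → ZMod d → ℝ) : ℕ → ℕ → ZMod d → ZMod d → ℝ
  | _, 0, e, u => if e = u then 1 else 0
  | k, n + 1, e, u => ∑ u', step k e u' * nuF step (k + 1) n u' u

lemma sum_pi_succ {X : Type*} [Fintype X] {N : ℕ} (F : (Fin (N + 1) → X) → ℝ) :
    ∑ q : Fin (N + 1) → X, F q = ∑ x : X, ∑ f : Fin N → X, F (Fin.cons x f) := by
  rw [← (Fin.consEquiv (fun _ : Fin (N + 1) => X)).sum_comp F, Fintype.sum_prod_type]
  rfl

lemma sum_subLeft (e : ZMod d) (g : ZMod d → ℝ) :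
    ∑ x : ZMod d, g (e - x) = ∑ u : ZMod d, g u :=
  Fintype.sum_equiv (Equiv.subLeft e) _ _ (fun _ => rfl)

variable {step : ℕ → ZMod d → ZMod d → ℝ}
  (hstep : ∀ k u, ∑ u' : ZMod d, step k u u' = 1)

include hstep

lemma sum_Wgt : ∀ (N k : ℕ) (e : ZMod d), ∑ q : Fin N → ZMod d, Wgt step k e q = 1 := by
  intro N
  induction N with
  | zero => intro k e; simp [Wgt]
  | succ N ih =>
    intro k e
    rw [sum_pi_succ]
    have : ∀ x : ZMod d, ∑ f : Fin N → ZMod d, Wgt step k e (Fin.cons x f)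
        = step k e (e - x) := by
      intro x
      simp only [Wgt_cons, ← Finset.mul_sum, ih (k + 1) (e - x), mul_one]
    rw [Finset.sum_congr rfl (fun x _ => this x), sum_subLeft e (step k e), hstep k e]

lemma sum_Wgt_ind : ∀ (n N k : ℕ) (e u : ZMod d), n ≤ N →
    ∑ q : Fin N → ZMod d, Wgt step k e q * (if cpath e q n = u then 1 else 0)
      = nuF step k n e u := by
  intro n
  induction n with
  | zero =>
    intro N k e u _
    simp only [cpath_zero, nuF]
    rw [← Finset.sum_mul, sum_Wgt hstep, one_mul]
  | succ n ih =>
    intro N k e u hn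
    match N, hn with
    | N + 1, hn =>
      rw [sum_pi_succ]
      have : ∀ x : ZMod d,
          ∑ f : Fin N → ZMod d, Wgt step k e (Fin.cons x f) *
            (if cpath e (Fin.cons x f) (n + 1) = u then 1 else 0)
          = step k e (e - x) * nuF step (k + 1) n (e - x) u := by
        intro x
        simp only [Wgt_cons, cpath_cons, mul_assoc, ← Finset.mul_sum]
        rw [ih N (k + 1) (e - x) u (by omega)]
      rw [Finset.sum_congr rfl (fun x _ => this x),
        sum_subLeft e (fun v => step k e v * nuF step (k + 1) n v u)]
      rfl

lemma sum_Wgt_pair : ∀ (n N k : ℕ) (e u u' : ZMod d), n + 1 ≤ N →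
    ∑ q : Fin N → ZMod d, Wgt step k e q * (if cpath e q n = u then 1 else 0)
        * (if cpath e q (n + 1) = u' then 1 else 0)
      = nuF step k n e u * step (k + n) u u' := by
  intro n
  induction n with
  | zero =>
    intro N k e u u' hn
    match N, hn with
    | N + 1, _ =>
      rw [sum_pi_succ]
      have : ∀ x : ZMod d,
          ∑ f : Fin N → ZMod d, Wgt step k e (Fin.cons x f)
            * (if cpath e (Fin.cons x f) 0 = u then 1 else 0)
            * (if cpath e (Fin.cons x f) 1 = u' then 1 else 0)
          = (if e = u then 1 else 0) * (step k e (e - x) * (if e - x = u' then 1 else 0)) := by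
        intro x
        simp only [Wgt_cons, cpath_cons, cpath_zero]
        rw [← Finset.sum_mul, ← Finset.sum_mul, mul_assoc, ← Finset.mul_sum,
          sum_Wgt hstep (N) (k+1) (e-x), mul_one]
        ring
      rw [Finset.sum_congr rfl (fun x _ => this x), ← Finset.mul_sum,
        sum_subLeft e (fun v => step k e v * (if v = u' then 1 else 0))]
      simp only [mul_ite, mul_one, mul_zero, Finset.sum_ite_eq', Finset.mem_univ, if_true]
      show _ = nuF step k 0 e u * step (k + 0) u u'
      by_cases h : e = u
      · subst h; simp [nuF]
      · simp [nuF, h]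
  | succ n ih =>
    intro N k e u u' hn
    match N, hn with
    | N + 1, hn =>
      rw [sum_pi_succ]
      have : ∀ x : ZMod d,
          ∑ f : Fin N → ZMod d, Wgt step k e (Fin.cons x f)
            * (if cpath e (Fin.cons x f) (n + 1) = u then 1 else 0)
            * (if cpath e (Fin.cons x f) (n + 1 + 1) = u' then 1 else 0)
          = step k e (e - x) * (nuF step (k + 1) n (e - x) u * step (k + 1 + n) u u') := by
        intro x
        simp only [Wgt_cons, cpath_cons]
        rw [← ih N (k + 1) (e - x) u u' (by omega), Finset.mul_sum]
        apply Finset.sum_congr rfl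
        intro f _
        ring
      rw [Finset.sum_congr rfl (fun x _ => this x)]
      have h2 : k + 1 + n = k + (n + 1) := by omega
      rw [h2]
      have h3 : ∑ x : ZMod d, step k e (e - x) * nuF step (k + 1) n (e - x) u
          = nuF step k (n + 1) e u := by
        rw [sum_subLeft e (fun v => step k e v * nuF step (k + 1) n v u)]; rfl
      rw [Finset.sum_congr rfl
        (fun x _ => (mul_assoc (step k e (e - x)) (nuF step (k + 1) n (e - x) u) _).symm),
        ← Finset.sum_mul, h3]

omit hstep in
lemma nuF_succ_right : ∀ (n k : ℕ) (e u : ZMod d),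
    nuF step k (n + 1) e u = ∑ u' : ZMod d, nuF step k n e u' * step (k + n) u' u := by
  intro n
  induction n with
  | zero =>
    intro k e u
    show ∑ u', step k e u' * (if u' = u then 1 else 0)
        = ∑ u', (if e = u' then 1 else 0) * step (k + 0) u' u
    simp [mul_ite, ite_mul, Finset.sum_ite_eq, Finset.sum_ite_eq']
  | succ n ih =>
    intro k e u
    show ∑ u', step k e u' * nuF step (k + 1) (n + 1) u' u = _
    have : ∀ u', step k e u' * nuF step (k + 1) (n + 1) u' u
        = ∑ u'', step k e u' * (nuF step (k + 1) n u' u'' * step (k + 1 + n) u'' u) := by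
      intro u'
      rw [ih (k + 1) u' u, Finset.mul_sum]
    rw [Finset.sum_congr rfl (fun u' _ => this u'), Finset.sum_comm]
    show _ = ∑ u'', (∑ u', step k e u' * nuF step (k + 1) n u' u'') * step (k + (n + 1)) u'' u
    apply Finset.sum_congr rfl
    intro u'' _
    rw [Finset.sum_mul]
    apply Finset.sum_congr rfl
    intro u' _
    have : k + 1 + n = k + (n + 1) := by omega
    rw [this, mul_assoc]

end Machinery
section Concrete

open Fin.NatCast

variable {d m : ℕ} [NeZero d] [NeZero m]

/-- Alice marginal on input `x` (computed from the pair `(x,x)`). -/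
noncomputable def NAx (p : Fin m → Fin m → ZMod d → ZMod d → ℝ) (x : Fin m) (a : ZMod d) : ℝ :=
  ∑ b : ZMod d, p x x a b

/-- Bob marginal on input `y` (computed from the pair `(y,y)`). -/
noncomputable def NBy (p : Fin m → Fin m → ZMod d → ZMod d → ℝ) (y : Fin m) (b : ZMod d) : ℝ :=
  ∑ a : ZMod d, p y y a b

/-- The transition kernel along the chain. -/
noncomputable def stp (p : Fin m → Fin m → ZMod d → ZMod d → ℝ) :
    ℕ → ZMod d → ZMod d → ℝ := fun c u u' =>
  if c = 0 then NBy p 0 u'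
  else if c % 2 = 1 then
    (if NBy p (((c - 1) / 2 : ℕ) : Fin m) u = 0 then (d : ℝ)⁻¹
     else p (((c + 1) / 2 : ℕ) : Fin m) (((c - 1) / 2 : ℕ) : Fin m) u' u
            / NBy p (((c - 1) / 2 : ℕ) : Fin m) u)
  else
    (if NAx p ((c / 2 : ℕ) : Fin m) u = 0 then (d : ℝ)⁻¹
     else p ((c / 2 : ℕ) : Fin m) ((c / 2 : ℕ) : Fin m) u u' / NAx p ((c / 2 : ℕ) : Fin m) u)

/-- The marginal distribution at each position of the chain. -/
noncomputable def muF (p : Fin m → Fin m → ZMod d → ZMod d → ℝ) (e : ZMod d) :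
    ℕ → ZMod d → ℝ := fun c u =>
  if c = 0 then (if e = u then 1 else 0)
  else if c % 2 = 1 then NBy p (((c - 1) / 2 : ℕ) : Fin m) u
  else NAx p ((c / 2 : ℕ) : Fin m) u

variable {p : Fin m → Fin m → ZMod d → ZMod d → ℝ}

lemma NAx_nonneg (hpos : ∀ x y a b, 0 ≤ p x y a b) (x : Fin m) (a : ZMod d) :
    0 ≤ NAx p x a := Finset.sum_nonneg fun _ _ => hpos _ _ _ _

lemma NBy_nonneg (hpos : ∀ x y a b, 0 ≤ p x y a b) (y : Fin m) (b : ZMod d) :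
    0 ≤ NBy p y b := Finset.sum_nonneg fun _ _ => hpos _ _ _ _

lemma stp_nonneg (hpos : ∀ x y a b, 0 ≤ p x y a b) (c : ℕ) (u u' : ZMod d) :
    0 ≤ stp p c u u' := by
  unfold stp
  split
  · exact NBy_nonneg hpos _ _
  split
  · split
    · positivity
    · exact div_nonneg (hpos _ _ _ _) (NBy_nonneg hpos _ _)
  · split
    · positivity
    · exact div_nonneg (hpos _ _ _ _) (NAx_nonneg hpos _ _)

lemma sum_inv_d : ∑ _u : ZMod d, (d : ℝ)⁻¹ = 1 := by
  rw [Finset.sum_const, Finset.card_univ, ZMod.card d, nsmul_eq_mul]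
  exact mul_inv_cancel₀ (Nat.cast_ne_zero.mpr (NeZero.ne d))

lemma stp_sum (hnorm : ∀ x y, ∑ a : ZMod d, ∑ b : ZMod d, p x y a b = 1)
    (hnsB : ∀ x x' y b, ∑ a : ZMod d, p x y a b = ∑ a : ZMod d, p x' y a b)
    (c : ℕ) (u : ZMod d) : ∑ u' : ZMod d, stp p c u u' = 1 := by
  unfold stp
  by_cases h0 : c = 0
  · subst h0
    rw [Finset.sum_congr rfl
      (fun u' _ => show (if (0:ℕ) = 0 then NBy p 0 u' else _) = NBy p 0 u' from if_pos rfl)]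
    rw [show (∑ u' : ZMod d, NBy p 0 u') = ∑ b : ZMod d, ∑ a : ZMod d, p 0 0 a b from rfl,
      Finset.sum_comm]
    exact hnorm 0 0
  simp only [if_neg h0]
  by_cases h1 : c % 2 = 1
  · simp only [if_pos h1]
    set y : Fin m := (((c - 1) / 2 : ℕ) : Fin m)
    set x : Fin m := (((c + 1) / 2 : ℕ) : Fin m)
    by_cases hz : NBy p y u = 0
    · simp only [if_pos hz]; exact sum_inv_d
    · simp only [if_neg hz]
      rw [← Finset.sum_div]
      rw [show (∑ u' : ZMod d, p x y u' u) = ∑ a : ZMod d, p x y a u from rfl, hnsB x y y u]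
      exact div_self hz
  · simp only [if_neg h1]
    set x : Fin m := ((c / 2 : ℕ) : Fin m)
    by_cases hz : NAx p x u = 0
    · simp only [if_pos hz]; exact sum_inv_d
    · simp only [if_neg hz]
      rw [← Finset.sum_div]
      exact div_self hz

lemma mu_mul_stp (hpos : ∀ x y a b, 0 ≤ p x y a b)
    (hnsB : ∀ x x' y b, ∑ a : ZMod d, p x y a b = ∑ a : ZMod d, p x' y a b)
    (e : ZMod d) (c : ℕ) (hc : c ≠ 0) (u u' : ZMod d) :
    muF p e c u * stp p c u u' =
      (if c % 2 = 1 then p (((c + 1) / 2 : ℕ) : Fin m) (((c - 1) / 2 : ℕ) : Fin m) u' u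
       else p ((c / 2 : ℕ) : Fin m) ((c / 2 : ℕ) : Fin m) u u') := by
  unfold muF stp
  simp only [if_neg hc]
  by_cases h1 : c % 2 = 1
  · simp only [if_pos h1]
    set y : Fin m := (((c - 1) / 2 : ℕ) : Fin m)
    set x : Fin m := (((c + 1) / 2 : ℕ) : Fin m)
    by_cases hz : NBy p y u = 0
    · simp only [if_pos hz, hz, zero_mul]
      have h2 : ∑ a : ZMod d, p x y a u = 0 := by rw [hnsB x y y u]; exact hz
      symm
      exact (Finset.sum_eq_zero_iff_of_nonneg (fun a _ => hpos x y a u)).mp h2 u'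
        (Finset.mem_univ u')
    · simp only [if_neg hz]
      field_simp
  · simp only [if_neg h1]
    set x : Fin m := ((c / 2 : ℕ) : Fin m)
    by_cases hz : NAx p x u = 0
    · simp only [if_pos hz, hz, zero_mul]
      symm
      exact (Finset.sum_eq_zero_iff_of_nonneg (fun b _ => hpos x x u b)).mp hz u'
        (Finset.mem_univ u')
    · simp only [if_neg hz]
      field_simp

lemma chapman (hpos : ∀ x y a b, 0 ≤ p x y a b)
    (hnsA : ∀ x y y' a, ∑ b : ZMod d, p x y a b = ∑ b : ZMod d, p x y' a b)
    (hnsB : ∀ x x' y b, ∑ a : ZMod d, p x y a b = ∑ a : ZMod d, p x' y a b)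
    (e : ZMod d) (c : ℕ) (u' : ZMod d) :
    ∑ u : ZMod d, muF p e c u * stp p c u u' = muF p e (c + 1) u' := by
  by_cases h0 : c = 0
  · subst h0
    have : ∀ u : ZMod d, muF p e 0 u * stp p 0 u u'
        = (if e = u then 1 else 0) * NBy p 0 u' := fun u => rfl
    rw [Finset.sum_congr rfl (fun u _ => this u)]
    simp only [ite_mul, one_mul, zero_mul, Finset.sum_ite_eq, Finset.mem_univ, if_true]
    rfl
  rw [Finset.sum_congr rfl (fun u _ => mu_mul_stp hpos hnsB e c h0 u u')]
  by_cases h1 : c % 2 = 1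
  · simp only [if_pos h1]
    set y : Fin m := (((c - 1) / 2 : ℕ) : Fin m)
    set x : Fin m := (((c + 1) / 2 : ℕ) : Fin m)
    have hx : ∑ u : ZMod d, p x y u' u = NAx p x u' := by
      rw [show (∑ u : ZMod d, p x y u' u) = ∑ b : ZMod d, p x y u' b from rfl, hnsA x y x u']
      rfl
    rw [hx]
    unfold muF
    rw [if_neg (by omega), if_neg (by omega : ¬ (c + 1) % 2 = 1)]
  · simp only [if_neg h1]
    set x : Fin m := ((c / 2 : ℕ) : Fin m)
    have hx : ∑ u : ZMod d, p x x u u' = NBy p x u' := rfl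
    rw [hx]
    unfold muF
    rw [if_neg (by omega), if_pos (by omega : (c + 1) % 2 = 1)]
    norm_num
    rfl

lemma nuF_eq_muF (hpos : ∀ x y a b, 0 ≤ p x y a b)
    (hnsA : ∀ x y y' a, ∑ b : ZMod d, p x y a b = ∑ b : ZMod d, p x y' a b)
    (hnsB : ∀ x x' y b, ∑ a : ZMod d, p x y a b = ∑ a : ZMod d, p x' y a b)
    (e : ZMod d) : ∀ (n : ℕ) (u : ZMod d), nuF (stp p) 0 n e u = muF p e n u := by
  intro n
  induction n with
  | zero => intro u; rfl
  | succ n ih =>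
    intro u
    rw [nuF_succ_right, Finset.sum_congr rfl (fun u' _ => by rw [ih u']),
      show (0 + n) = n from by omega]
    exact chapman hpos hnsA hnsB e n u
end Concrete
section PSection

variable {d m : ℕ} [NeZero d] [NeZero m]

/-- The partially deterministic behaviors in the decomposition. -/
noncomputable def Pfun (p : Fin m → Fin m → ZMod d → ZMod d → ℝ) (e : ZMod d)
    (q : Fin (2 * m - 1) → ZMod d) (x y : Fin m) (a b : ZMod d) : ℝ :=
  if x = y then
    (if cpath e q (2 * x.val) = a then 1 else 0) * (if cpath e q (2 * x.val + 1) = b then 1 else 0)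
  else if x.val = y.val + 1 then
    (if cpath e q (2 * y.val + 1) = b then 1 else 0) *
      (if cpath e q (2 * y.val + 2) = a then 1 else 0)
  else if x = 0 ∧ y.val = m - 1 then
    (if e = a then 1 else 0) * (if cpath e q (2 * m - 1) = b then 1 else 0)
  else p x y a b

variable {p : Fin m → Fin m → ZMod d → ZMod d → ℝ} {e : ZMod d}

lemma sum_ite_pair (f : ZMod d → ZMod d) (u v : ZMod d) :
    ∑ j : ZMod d, (if u = f j then (1 : ℝ) else 0) * (if v = j then 1 else 0)
      = if u = f v then 1 else 0 := by
  rw [Finset.sum_eq_single v (fun j _ hj => by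
      rw [if_neg (fun hv : v = j => hj hv.symm), mul_zero])
    (fun h => absurd (Finset.mem_univ v) h)]
  by_cases h : u = f v <;> simp [h]

lemma cpath_full {N : ℕ} (e : ZMod d) (q : Fin N → ZMod d) :
    cpath e q N = e - ∑ c, q c := by
  unfold cpath
  congr 1
  rw [← Fin.sum_univ_eq_sum_range (fun c => qext q c) N]
  apply Finset.sum_congr rfl
  intro i _
  simp [qext, i.isLt]

lemma Pfun_diag (q : Fin (2 * m - 1) → ZMod d) (i : Fin m) (a b : ZMod d) :
    Pfun p e q i i a b
      = (if cpath e q (2 * i.val) = a then 1 else 0) *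
          (if cpath e q (2 * i.val + 1) = b then 1 else 0) := if_pos rfl

lemma Pfun_off (q : Fin (2 * m - 1) → ZMod d) (i : Fin m) (h : i.val + 1 < m) (a b : ZMod d) :
    Pfun p e q ⟨i.val + 1, h⟩ i a b
      = (if cpath e q (2 * i.val + 1) = b then 1 else 0) *
          (if cpath e q (2 * i.val + 2) = a then 1 else 0) := by
  unfold Pfun
  rw [if_neg (by simp [Fin.ext_iff]), if_pos rfl]

lemma Pfun_last (hm : 3 ≤ m) (q : Fin (2 * m - 1) → ZMod d) (a b : ZMod d) :
    Pfun p e q 0 ⟨m - 1, by omega⟩ a b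
      = (if e = a then 1 else 0) * (if cpath e q (2 * m - 1) = b then 1 else 0) := by
  unfold Pfun
  rw [if_neg (by simp [Fin.ext_iff]; omega), if_neg (by simp), if_pos ⟨rfl, rfl⟩]

lemma Pfun_nonneg (hpos : ∀ x y a b, 0 ≤ p x y a b) (q : Fin (2 * m - 1) → ZMod d)
    (x y : Fin m) (a b : ZMod d) : 0 ≤ Pfun p e q x y a b := by
  unfold Pfun
  split
  · positivity
  split
  · positivity
  split
  · positivity
  · exact hpos x y a b

lemma Pfun_norm (hnorm : ∀ x y, ∑ a : ZMod d, ∑ b : ZMod d, p x y a b = 1)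
    (q : Fin (2 * m - 1) → ZMod d) (x y : Fin m) :
    ∑ a : ZMod d, ∑ b : ZMod d, Pfun p e q x y a b = 1 := by
  unfold Pfun
  split
  · simp [Finset.sum_ite_eq, ← Finset.sum_mul]
  split
  · simp [Finset.sum_ite_eq, ← Finset.sum_mul]
  split
  · simp [Finset.sum_ite_eq, ← Finset.sum_mul]
  · exact hnorm x y

lemma Pfun_diag_sum (q : Fin (2 * m - 1) → ZMod d) (i : Fin m) (k : ZMod d) :
    ∑ j : ZMod d, Pfun p e q i i (j + k) j
      = if qext q (2 * i.val) = k then 1 else 0 := by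
  rw [Finset.sum_congr rfl (fun j _ => Pfun_diag q i (j + k) j),
    sum_ite_pair (fun j => j + k) _ _]
  apply if_congr _ rfl rfl
  rw [cpath_succ]
  constructor <;> intro hh <;> linear_combination hh

lemma Pfun_off_sum (q : Fin (2 * m - 1) → ZMod d) (i : Fin m) (h : i.val + 1 < m) (k : ZMod d) :
    ∑ j : ZMod d, Pfun p e q ⟨i.val + 1, h⟩ i (j + k) j
      = if qext q (2 * i.val + 1) = -k then 1 else 0 := by
  rw [Finset.sum_congr rfl (fun j _ => Pfun_off q i h (j + k) j),
    Finset.sum_congr rfl (fun j _ => mul_comm _ _),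
    sum_ite_pair (fun j => j + k) _ _]
  apply if_congr _ rfl rfl
  rw [show 2 * i.val + 2 = (2 * i.val + 1) + 1 from rfl, cpath_succ]
  constructor <;> intro hh <;> linear_combination -hh

lemma Pfun_last_sum (hm : 3 ≤ m) (q : Fin (2 * m - 1) → ZMod d) (k : ZMod d) :
    ∑ j : ZMod d, Pfun p e q 0 ⟨m - 1, by omega⟩ (j + k) j
      = if (∑ c, q c) = k then 1 else 0 := by
  rw [Finset.sum_congr rfl (fun j _ => Pfun_last hm q (j + k) j),
    sum_ite_pair (fun j => j + k) _ _]
  apply if_congr _ rfl rfl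
  rw [cpath_full]
  constructor <;> intro hh <;> linear_combination hh

end PSection
section RepSection

variable {d m : ℕ} [NeZero d] [NeZero m]
variable {p : Fin m → Fin m → ZMod d → ZMod d → ℝ} {e : ZMod d}

lemma det_zero (hpos : ∀ x y a b, 0 ≤ p x y a b)
    (hnorm : ∀ x y, ∑ a : ZMod d, ∑ b : ZMod d, p x y a b = 1)
    (hdet : ∀ y, ∑ b : ZMod d, p 0 y e b = 1)
    (y : Fin m) (a b : ZMod d) (ha : a ≠ e) : p 0 y a b = 0 := by
  have h1 := hnorm 0 y
  rw [← Finset.add_sum_erase Finset.univ (fun a' => ∑ b' : ZMod d, p 0 y a' b')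
    (Finset.mem_univ e)] at h1
  have h2 : ∑ a' ∈ Finset.univ.erase e, ∑ b' : ZMod d, p 0 y a' b' = 0 := by
    have := hdet y
    linarith
  have h3 : ∑ b' : ZMod d, p 0 y a b' = 0 :=
    (Finset.sum_eq_zero_iff_of_nonneg
      (fun a' _ => Finset.sum_nonneg fun b' _ => hpos _ _ _ _)).mp h2 a
      (Finset.mem_erase.mpr ⟨ha, Finset.mem_univ a⟩)
  exact (Finset.sum_eq_zero_iff_of_nonneg (fun b' _ => hpos _ _ _ _)).mp h3 b
    (Finset.mem_univ b)

lemma NBy_det (hpos : ∀ x y a b, 0 ≤ p x y a b)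
    (hnorm : ∀ x y, ∑ a : ZMod d, ∑ b : ZMod d, p x y a b = 1)
    (hnsB : ∀ x x' y b, ∑ a : ZMod d, p x y a b = ∑ a : ZMod d, p x' y a b)
    (hdet : ∀ y, ∑ b : ZMod d, p 0 y e b = 1)
    (y : Fin m) (b : ZMod d) : NBy p y b = p 0 y e b := by
  rw [show NBy p y b = ∑ a : ZMod d, p y y a b from rfl, hnsB y 0 y b]
  rw [Finset.sum_eq_single e (fun a _ ha => det_zero hpos hnorm hdet y a b ha)
    (fun h => absurd (Finset.mem_univ e) h)]

lemma repr_diag (hpos : ∀ x y a b, 0 ≤ p x y a b)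
    (hnorm : ∀ x y, ∑ a : ZMod d, ∑ b : ZMod d, p x y a b = 1)
    (hnsB : ∀ x x' y b, ∑ a : ZMod d, p x y a b = ∑ a : ZMod d, p x' y a b)
    (hdet : ∀ y, ∑ b : ZMod d, p 0 y e b = 1)
    (i : Fin m) (a b : ZMod d) :
    muF p e (2 * i.val) a * stp p (2 * i.val) a b = p i i a b := by
  by_cases h0 : i.val = 0
  · have hi : i = 0 := Fin.ext (by simpa using h0)
    subst hi
    rw [show (0 : Fin m).val = 0 from rfl] at *
    show muF p e 0 a * stp p 0 a b = _
    rw [show muF p e 0 a = (if e = a then (1:ℝ) else 0) from rfl,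
      show stp p 0 a b = NBy p 0 b from rfl]
    by_cases ha : e = a
    · subst ha
      rw [if_pos rfl, one_mul, NBy_det hpos hnorm hnsB hdet 0 b]
    · rw [if_neg ha, zero_mul, det_zero hpos hnorm hdet 0 a b (fun h => ha h.symm)]
  · rw [mu_mul_stp hpos hnsB e (2 * i.val) (by omega) a b,
      if_neg (by omega : ¬ (2 * i.val) % 2 = 1),
      show (2 * i.val) / 2 = i.val from by omega, Fin.cast_val_eq_self i]

lemma repr_off (hpos : ∀ x y a b, 0 ≤ p x y a b)
    (hnsB : ∀ x x' y b, ∑ a : ZMod d, p x y a b = ∑ a : ZMod d, p x' y a b)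
    (i : Fin m) (h : i.val + 1 < m) (a b : ZMod d) :
    muF p e (2 * i.val + 1) b * stp p (2 * i.val + 1) b a = p ⟨i.val + 1, h⟩ i a b := by
  rw [mu_mul_stp hpos hnsB e (2 * i.val + 1) (by omega) b a,
    if_pos (by omega : (2 * i.val + 1) % 2 = 1),
    show (2 * i.val + 1 + 1) / 2 = i.val + 1 from by omega,
    show (2 * i.val + 1 - 1) / 2 = i.val from by omega]
  congr 1
  · exact Fin.ext (Fin.val_cast_of_lt h)
  · exact Fin.cast_val_eq_self i

lemma repr_last (hpos : ∀ x y a b, 0 ≤ p x y a b)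
    (hnorm : ∀ x y, ∑ a : ZMod d, ∑ b : ZMod d, p x y a b = 1)
    (hnsB : ∀ x x' y b, ∑ a : ZMod d, p x y a b = ∑ a : ZMod d, p x' y a b)
    (hdet : ∀ y, ∑ b : ZMod d, p 0 y e b = 1) (hm : 3 ≤ m) (a b : ZMod d) :
    (if e = a then (1 : ℝ) else 0) * muF p e (2 * m - 1) b
      = p 0 ⟨m - 1, by omega⟩ a b := by
  have hmu : muF p e (2 * m - 1) b = NBy p ⟨m - 1, by omega⟩ b := by
    unfold muF
    rw [if_neg (by omega), if_pos (by omega : (2 * m - 1) % 2 = 1),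
      show (2 * m - 1 - 1) / 2 = m - 1 from by omega]
    congr 1
    exact Fin.ext (Fin.val_cast_of_lt (by omega))
  rw [hmu, NBy_det hpos hnorm hnsB hdet _ b]
  by_cases ha : e = a
  · subst ha; rw [if_pos rfl, one_mul]
  · rw [if_neg ha, zero_mul, det_zero hpos hnorm hdet _ a b (fun h => ha h.symm)]

/-- split a sum over `range (2*n)` by parity -/
lemma sum_range_two_mul (f : ℕ → ℝ) (n : ℕ) :
    ∑ c ∈ Finset.range (2 * n), f c = ∑ i ∈ Finset.range n, (f (2 * i) + f (2 * i + 1)) := by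
  induction n with
  | zero => simp
  | succ n ih =>
    rw [show 2 * (n + 1) = 2 * n + 1 + 1 from by omega, Finset.sum_range_succ,
      Finset.sum_range_succ, ih, Finset.sum_range_succ]
    ring

end RepSection
section QSection

variable {d : ℕ} [NeZero d]

lemma Qsum (m : ℕ) (hm : 3 ≤ m) (q : Fin (2 * m - 1) → ZMod d) (G : ZMod d) :
    ∑ c : Fin (2 * m), (if h : (c : ℕ) < 2 * m - 1 then q ⟨c, h⟩ else G)
      = (∑ c', q c') + G := by
  rw [Fin.sum_univ_eq_sum_range
    (fun c => if h : c < 2 * m - 1 then q ⟨c, h⟩ else G) (2 * m)]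
  rw [show Finset.range (2 * m) = Finset.range ((2 * m - 1) + 1) from by
      rw [Nat.sub_add_cancel (by omega)],
    Finset.sum_range_succ, dif_neg (show ¬ (2 * m - 1 < 2 * m - 1) from by omega)]
  congr 1
  rw [← Fin.sum_univ_eq_sum_range
    (fun c => if h : c < 2 * m - 1 then q ⟨c, h⟩ else G) (2 * m - 1)]
  exact Finset.sum_congr rfl fun c _ => by rw [dif_pos c.isLt]

lemma Qval {m : ℕ} [NeZero m] (hm : 3 ≤ m) (q : Fin (2 * m - 1) → ZMod d) (G : ZMod d)
    (α : ZMod d → ℝ) :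
    ∑ c : Fin (2 * m), α (if h : (c : ℕ) < 2 * m - 1 then q ⟨c, h⟩ else G)
      = ∑ i : Fin m, (α (qext q (2 * i.val)) +
          α (if i.val = m - 1 then G else qext q (2 * i.val + 1))) := by
  rw [Fin.sum_univ_eq_sum_range
      (fun c => α (if h : c < 2 * m - 1 then q ⟨c, h⟩ else G)) (2 * m),
    sum_range_two_mul (fun c => α (if h : c < 2 * m - 1 then q ⟨c, h⟩ else G)) m,
    ← Fin.sum_univ_eq_sum_range
      (fun n => α (if h : 2 * n < 2 * m - 1 then q ⟨2 * n, h⟩ else G)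
        + α (if h : 2 * n + 1 < 2 * m - 1 then q ⟨2 * n + 1, h⟩ else G)) m]
  refine Finset.sum_congr rfl fun i _ => ?_
  have hlt : 2 * i.val < 2 * m - 1 := by have := i.isLt; omega
  congr 1
  · rw [dif_pos hlt]
    unfold qext
    rw [dif_pos hlt]
  · by_cases him : i.val = m - 1
    · rw [if_pos him, dif_neg (show ¬ (2 * i.val + 1 < 2 * m - 1) from by omega)]
    · rw [if_neg him,
        dif_pos (show 2 * i.val + 1 < 2 * m - 1 from by have := i.isLt; omega)]
      unfold qext
      rw [dif_pos (show 2 * i.val + 1 < 2 * m - 1 from by have := i.isLt; omega)]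

end QSection
lemma collapse_sum {d : ℕ} [NeZero d] (α : ZMod d → ℝ) (r : ℝ) (c1 c2 : ZMod d) :
    ∑ k : ZMod d, α k * (r * ((if c1 = k then (1 : ℝ) else 0) + (if c2 = k then 1 else 0)))
      = r * (α c1 + α c2) := by
  have h : ∀ k : ZMod d, α k * (r * ((if c1 = k then (1 : ℝ) else 0) + (if c2 = k then 1 else 0)))
      = (if c1 = k then α k * r else 0) + (if c2 = k then α k * r else 0) := by
    intro k
    by_cases h1 : c1 = k <;> by_cases h2 : c2 = k <;> simp [h1, h2] <;> ring
  rw [Finset.sum_congr rfl (fun k _ => h k), Finset.sum_add_distrib,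
    Finset.sum_ite_eq Finset.univ c1 (fun k => α k * r),
    Finset.sum_ite_eq Finset.univ c2 (fun k => α k * r)]
  simp only [Finset.mem_univ, if_true]
  ring
/-- every no-signaling behavior `p ∈ NS(d,d,m,m)` (`m ≥ 3`) whose marginal
on input `x* = 1` (index `0`) is deterministic at `e` admits, on the chain-relevant
input pairs, a convex decomposition `p = Σ_q w(q) P_q` over tuples
`q ∈ ℤ_d^{2m-1}` into valid behaviors satisfying `P_q(A_i - B_i = q_{2i-1}) = 1` and
`P_q(B_i - A_{i+1} = q_{2i}) = 1` with `q_{2m} := -(q_1 + ... + q_{2m-1}) - 1`;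
consequently `p` cannot violate any chain inequality. -/
theorem partially_deterministic_no_chain_violation
    (d m : ℕ) [NeZero d] [NeZero m] (hd : 2 ≤ d) (hm : 3 ≤ m) (e : ZMod d)
    (p : Fin m → Fin m → ZMod d → ZMod d → ℝ)
    (hpos : ∀ x y a b, 0 ≤ p x y a b)
    (hnorm : ∀ x y, ∑ a : ZMod d, ∑ b : ZMod d, p x y a b = 1)
    (hnsA : ∀ x y y' a, ∑ b : ZMod d, p x y a b = ∑ b : ZMod d, p x y' a b)
    (hnsB : ∀ x x' y b, ∑ a : ZMod d, p x y a b = ∑ a : ZMod d, p x' y a b)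
    (hdet : ∀ y, ∑ b : ZMod d, p 0 y e b = 1) :
    (∃ (w : (Fin (2 * m - 1) → ZMod d) → ℝ)
        (P : (Fin (2 * m - 1) → ZMod d) → Fin m → Fin m → ZMod d → ZMod d → ℝ),
      (∀ q, 0 ≤ w q) ∧ (∑ q : Fin (2 * m - 1) → ZMod d, w q = 1) ∧
      (∀ q x y a b, 0 ≤ P q x y a b) ∧
      (∀ q x y, ∑ a : ZMod d, ∑ b : ZMod d, P q x y a b = 1) ∧
      (∀ (q : Fin (2 * m - 1) → ZMod d) (i : Fin m),
        ∑ j : ZMod d, P q i i (j + q ⟨2 * i.val, by have := i.isLt; omega⟩) j = 1) ∧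
      (∀ (q : Fin (2 * m - 1) → ZMod d) (i : Fin m) (h : i.val + 1 < m),
        ∑ j : ZMod d,
          P q ⟨i.val + 1, h⟩ i (j - q ⟨2 * i.val + 1, by omega⟩) j = 1) ∧
      (∀ q : Fin (2 * m - 1) → ZMod d,
        ∑ j : ZMod d, P q 0 ⟨m - 1, by omega⟩ (j + ∑ c, q c) j = 1) ∧
      (∀ (i : Fin m) (a b : ZMod d),
        p i i a b = ∑ q : Fin (2 * m - 1) → ZMod d, w q * P q i i a b) ∧
      (∀ (i : Fin m) (h : i.val + 1 < m) (a b : ZMod d),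
        p ⟨i.val + 1, h⟩ i a b =
          ∑ q : Fin (2 * m - 1) → ZMod d, w q * P q ⟨i.val + 1, h⟩ i a b) ∧
      (∀ a b : ZMod d,
        p 0 ⟨m - 1, by omega⟩ a b =
          ∑ q : Fin (2 * m - 1) → ZMod d, w q * P q 0 ⟨m - 1, by omega⟩ a b)) ∧
    (∀ α : ZMod d → ℝ, chainValue d m α p ≤ classicalBound d m α) := by
  classical
  have hsum1 : ∀ k u, ∑ u' : ZMod d, stp p k u u' = 1 := stp_sum hnorm hnsB
  have hwpos : ∀ q : Fin (2 * m - 1) → ZMod d, 0 ≤ Wgt (stp p) 0 e q := fun q =>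
    Finset.prod_nonneg fun c _ => stp_nonneg hpos _ _ _
  have hwsum : ∑ q : Fin (2 * m - 1) → ZMod d, Wgt (stp p) 0 e q = 1 :=
    sum_Wgt hsum1 (2 * m - 1) 0 e
  -- marginal identities
  have hmarg : ∀ (n : ℕ) (u : ZMod d), n ≤ 2 * m - 1 →
      ∑ q : Fin (2 * m - 1) → ZMod d,
        Wgt (stp p) 0 e q * (if cpath e q n = u then 1 else 0) = muF p e n u := by
    intro n u hn
    rw [sum_Wgt_ind hsum1 n (2 * m - 1) 0 e u hn]
    exact nuF_eq_muF hpos hnsA hnsB e n u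
  have hpair : ∀ (n : ℕ) (u u' : ZMod d), n + 1 ≤ 2 * m - 1 →
      ∑ q : Fin (2 * m - 1) → ZMod d,
        Wgt (stp p) 0 e q * (if cpath e q n = u then 1 else 0)
          * (if cpath e q (n + 1) = u' then 1 else 0)
        = muF p e n u * stp p n u u' := by
    intro n u u' hn
    rw [sum_Wgt_pair hsum1 n (2 * m - 1) 0 e u u' hn, Nat.zero_add,
      nuF_eq_muF hpos hnsA hnsB e n u]
  -- the reproduction identities
  have hrep8 : ∀ (i : Fin m) (a b : ZMod d),
      p i i a b = ∑ q : Fin (2 * m - 1) → ZMod d, Wgt (stp p) 0 e q * Pfun p e q i i a b := by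
    intro i a b
    have h1 := hpair (2 * i.val) a b (by have := i.isLt; omega)
    rw [repr_diag hpos hnorm hnsB hdet i a b] at h1
    rw [← h1]
    exact Finset.sum_congr rfl fun q _ => by rw [Pfun_diag, ← mul_assoc]
  have hrep9 : ∀ (i : Fin m) (h : i.val + 1 < m) (a b : ZMod d),
      p ⟨i.val + 1, h⟩ i a b
        = ∑ q : Fin (2 * m - 1) → ZMod d, Wgt (stp p) 0 e q * Pfun p e q ⟨i.val + 1, h⟩ i a b := by
    intro i h a b
    have h1 := hpair (2 * i.val + 1) b a (by omega)
    rw [repr_off hpos hnsB i h a b,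
      show 2 * i.val + 1 + 1 = 2 * i.val + 2 from by omega] at h1
    rw [← h1]
    exact Finset.sum_congr rfl fun q _ => by rw [Pfun_off _ _ h, ← mul_assoc]
  have hrep10 : ∀ a b : ZMod d,
      p 0 ⟨m - 1, by omega⟩ a b
        = ∑ q : Fin (2 * m - 1) → ZMod d,
            Wgt (stp p) 0 e q * Pfun p e q 0 ⟨m - 1, by omega⟩ a b := by
    intro a b
    have h1 := hmarg (2 * m - 1) b (le_refl _)
    calc p 0 ⟨m - 1, by omega⟩ a b
        = (if e = a then (1 : ℝ) else 0) * muF p e (2 * m - 1) b :=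
          (repr_last hpos hnorm hnsB hdet hm a b).symm
      _ = (if e = a then (1 : ℝ) else 0) *
            ∑ q : Fin (2 * m - 1) → ZMod d,
              Wgt (stp p) 0 e q * (if cpath e q (2 * m - 1) = b then 1 else 0) := by rw [h1]
      _ = ∑ q : Fin (2 * m - 1) → ZMod d,
            Wgt (stp p) 0 e q * Pfun p e q 0 ⟨m - 1, by omega⟩ a b := by
          rw [Finset.mul_sum]
          exact Finset.sum_congr rfl fun q _ => by rw [Pfun_last hm]; ring
  constructor
  · refine ⟨fun q => Wgt (stp p) 0 e q, Pfun p e, hwpos, hwsum,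
      (fun q x y a b => Pfun_nonneg hpos q x y a b),
      (fun q x y => Pfun_norm hnorm q x y), ?_, ?_, ?_, hrep8, hrep9, hrep10⟩
    · intro q i
      rw [Pfun_diag_sum q i, if_pos]
      show qext q (2 * i.val) = _
      unfold qext
      rw [dif_pos (show 2 * i.val < 2 * m - 1 from by have := i.isLt; omega)]
    · intro q i h
      rw [Finset.sum_congr rfl
          (fun j _ => by rw [sub_eq_add_neg] :
            ∀ j ∈ Finset.univ, Pfun p e q ⟨i.val + 1, h⟩ i (j - q ⟨2 * i.val + 1, by omega⟩) j
              = Pfun p e q ⟨i.val + 1, h⟩ i (j + -(q ⟨2 * i.val + 1, by omega⟩)) j),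
        Pfun_off_sum q i h, neg_neg, if_pos]
      unfold qext
      rw [dif_pos (show 2 * i.val + 1 < 2 * m - 1 from by omega)]
    · intro q
      rw [Pfun_last_sum hm q, if_pos rfl]
  · intro α
    have hA : ∀ (i : Fin m) (k : ZMod d), (∑ j : ZMod d, p i i (j + k) j)
        = ∑ q : Fin (2 * m - 1) → ZMod d,
            Wgt (stp p) 0 e q * (if qext q (2 * i.val) = k then 1 else 0) := by
      intro i k
      rw [Finset.sum_congr rfl (fun j _ => hrep8 i (j + k) j), Finset.sum_comm]
      exact Finset.sum_congr rfl fun q _ => by rw [← Finset.mul_sum, Pfun_diag_sum]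
    have hBoff : ∀ (i : Fin m) (h : i.val + 1 < m) (k : ZMod d),
        (∑ j : ZMod d, p ⟨i.val + 1, h⟩ i (j + -k) j)
        = ∑ q : Fin (2 * m - 1) → ZMod d,
            Wgt (stp p) 0 e q * (if qext q (2 * i.val + 1) = k then 1 else 0) := by
      intro i h k
      rw [Finset.sum_congr rfl (fun j _ => hrep9 i h (j + -k) j), Finset.sum_comm]
      exact Finset.sum_congr rfl fun q _ => by
        rw [← Finset.mul_sum, Pfun_off_sum q i h, neg_neg]
    have hBlast : ∀ (z : Fin m), z.val = m - 1 → ∀ k : ZMod d,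
        (∑ j : ZMod d, p 0 z (j + (-k - 1)) j)
        = ∑ q : Fin (2 * m - 1) → ZMod d,
            Wgt (stp p) 0 e q * (if (-(∑ c, q c) - 1 : ZMod d) = k then 1 else 0) := by
      intro z hz k
      rw [show z = ⟨m - 1, by omega⟩ from Fin.ext (by simpa using hz)]
      rw [Finset.sum_congr rfl (fun j _ => hrep10 (j + (-k - 1)) j), Finset.sum_comm]
      refine Finset.sum_congr rfl fun q _ => ?_
      rw [← Finset.mul_sum, Pfun_last_sum hm]
      congr 1
      apply if_congr _ rfl rfl
      constructor <;> intro hh <;> linear_combination -hh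
    have key : chainValue d m α p
        = ∑ q : Fin (2 * m - 1) → ZMod d, Wgt (stp p) 0 e q *
            (∑ i : Fin m, (α (qext q (2 * i.val)) +
              α (if i.val = m - 1 then -(∑ c, q c) - 1 else qext q (2 * i.val + 1)))) := by
      have hterm : ∀ (k : ZMod d) (i : Fin m),
          ((∑ j : ZMod d, p i i (j + k) j) +
            (if i.val = m - 1 then ∑ j : ZMod d, p 0 i (j + (-k - 1)) j
             else ∑ j : ZMod d, p (i + 1) i (j + (-k)) j))
          = ∑ q : Fin (2 * m - 1) → ZMod d,
              Wgt (stp p) 0 e q * ((if qext q (2 * i.val) = k then (1 : ℝ) else 0)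
                + (if (if i.val = m - 1 then -(∑ c, q c) - 1
                      else qext q (2 * i.val + 1)) = k then 1 else 0)) := by
        intro k i
        rw [Finset.sum_congr rfl
            (fun (q : Fin (2 * m - 1) → ZMod d) _ => mul_add (Wgt (stp p) 0 e q)
              (if qext q (2 * i.val) = k then (1 : ℝ) else 0)
              (if (if i.val = m - 1 then -(∑ c, q c) - 1
                  else qext q (2 * i.val + 1)) = k then 1 else 0)),
          Finset.sum_add_distrib]
        congr 1
        · exact hA i k
        · by_cases him : i.val = m - 1
          · rw [if_pos him, hBlast i him k]
            exact Finset.sum_congr rfl fun q _ => by rw [if_pos him]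
          · rw [if_neg him]
            have h1 : i.val + 1 < m := by have := i.isLt; omega
            have hi1 : (i + 1 : Fin m) = ⟨i.val + 1, h1⟩ := by
              apply Fin.ext
              rw [Fin.val_add, Fin.val_one', Nat.mod_eq_of_lt (show 1 < m from by omega),
                Nat.mod_eq_of_lt h1]
            rw [hi1, hBoff i h1 k]
            exact Finset.sum_congr rfl fun q _ => by rw [if_neg him]
      unfold chainValue
      rw [Finset.sum_congr rfl (fun k _ =>
        congrArg (fun z => α k * z) (Finset.sum_congr rfl (fun i _ => hterm k i)))]
      calc ∑ k : ZMod d, α k * ∑ i : Fin m, ∑ q : Fin (2 * m - 1) → ZMod d,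
              Wgt (stp p) 0 e q * ((if qext q (2 * i.val) = k then (1 : ℝ) else 0)
                + (if (if i.val = m - 1 then -(∑ c, q c) - 1
                      else qext q (2 * i.val + 1)) = k then 1 else 0))
          = ∑ k : ZMod d, ∑ i : Fin m, ∑ q : Fin (2 * m - 1) → ZMod d, α k * (Wgt (stp p) 0 e q * ((if qext q (2 * (i : Fin m).val) = k then (1 : ℝ) else 0) + (if (if (i : Fin m).val = m - 1 then -(∑ c, q c) - 1 else qext q (2 * (i : Fin m).val + 1)) = k then 1 else 0))) := by
            simp only [Finset.mul_sum]
        _ = ∑ i : Fin m, ∑ k : ZMod d, ∑ q : Fin (2 * m - 1) → ZMod d, α k * (Wgt (stp p) 0 e q * ((if qext q (2 * (i : Fin m).val) = k then (1 : ℝ) else 0) + (if (if (i : Fin m).val = m - 1 then -(∑ c, q c) - 1 else qext q (2 * (i : Fin m).val + 1)) = k then 1 else 0))) :=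
            Finset.sum_comm
        _ = ∑ i : Fin m, ∑ q : Fin (2 * m - 1) → ZMod d, ∑ k : ZMod d, α k * (Wgt (stp p) 0 e q * ((if qext q (2 * (i : Fin m).val) = k then (1 : ℝ) else 0) + (if (if (i : Fin m).val = m - 1 then -(∑ c, q c) - 1 else qext q (2 * (i : Fin m).val + 1)) = k then 1 else 0))) :=
            Finset.sum_congr rfl fun i _ => Finset.sum_comm
        _ = ∑ q : Fin (2 * m - 1) → ZMod d, ∑ i : Fin m, ∑ k : ZMod d, α k * (Wgt (stp p) 0 e q * ((if qext q (2 * (i : Fin m).val) = k then (1 : ℝ) else 0) + (if (if (i : Fin m).val = m - 1 then -(∑ c, q c) - 1 else qext q (2 * (i : Fin m).val + 1)) = k then 1 else 0))) :=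
            Finset.sum_comm
        _ = ∑ q : Fin (2 * m - 1) → ZMod d, ∑ i : Fin m,
              (Wgt (stp p) 0 e q * (α (qext q (2 * i.val)) +
                α (if i.val = m - 1 then -(∑ c, q c) - 1 else qext q (2 * i.val + 1)))) :=
            Finset.sum_congr rfl fun q _ => Finset.sum_congr rfl fun i _ =>
              collapse_sum α (Wgt (stp p) 0 e q) (qext q (2 * i.val)) _
        _ = ∑ q : Fin (2 * m - 1) → ZMod d, Wgt (stp p) 0 e q *
              (∑ i : Fin m, (α (qext q (2 * i.val)) +
                α (if i.val = m - 1 then -(∑ c, q c) - 1 else qext q (2 * i.val + 1)))) :=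
            Finset.sum_congr rfl fun q _ => (Finset.mul_sum _ _ _).symm
    have hbdd : BddAbove {S : ℝ | ∃ Q : Fin (2 * m) → ZMod d,
        (∑ i, Q i) = -1 ∧ S = ∑ i, α (Q i)} := by
      apply Set.Finite.bddAbove
      apply Set.Finite.subset (Set.finite_range (fun Q : Fin (2 * m) → ZMod d => ∑ i, α (Q i)))
      rintro S ⟨Q, _, hS⟩
      exact ⟨Q, hS.symm⟩
    have hSle : ∀ q : Fin (2 * m - 1) → ZMod d,
        (∑ i : Fin m, (α (qext q (2 * i.val)) +
          α (if i.val = m - 1 then -(∑ c, q c) - 1 else qext q (2 * i.val + 1))))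
          ≤ classicalBound d m α := by
      intro q
      apply le_csSup hbdd
      refine ⟨fun c : Fin (2 * m) =>
        (if h : c.val < 2 * m - 1 then q ⟨c.val, h⟩ else -(∑ c', q c') - 1), ?_, ?_⟩
      · exact (Qsum m hm q (-(∑ c', q c') - 1)).trans (by ring)
      · exact (Qval hm q (-(∑ c', q c') - 1) α).symm
    calc chainValue d m α p
        = ∑ q : Fin (2 * m - 1) → ZMod d, Wgt (stp p) 0 e q *
            (∑ i : Fin m, (α (qext q (2 * i.val)) +
              α (if i.val = m - 1 then -(∑ c, q c) - 1 else qext q (2 * i.val + 1)))) := key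
      _ ≤ ∑ q : Fin (2 * m - 1) → ZMod d, Wgt (stp p) 0 e q * classicalBound d m α :=
          Finset.sum_le_sum fun q _ => mul_le_mul_of_nonneg_left (hSle q) (hwpos q)
      _ = classicalBound d m α := by rw [← Finset.sum_mul, hwsum, one_mul]
end

section
/- Suppose an assemblage {σ^obs_{a|x}}_{x ∈ {1,...,m}} admits a decomposition {ξ^γ_{a|x}} indexed by strings γ: {1,...,m} → ℤ_d, with ξ^γ_{a|x} ⪰ 0, Σ_γ ξ^γ_{a|x} = σ^obs_{a|x}, Σ_a ξ^γ_{a|x} independent of x for each γ, and Σ_γ Tr(ξ^γ_{a=γ(x)|x}) = 1 for every x ∈ {1,...,m} (Eve guesses all m inputs perfectly). Then the assemblage is unsteerable: setting ζ^γ := ξ^γ_{a=γ(x)|x} (which is independent of x), we have ζ^γ ⪰ 0, Σ_γ Tr(ζ^γ) = 1, and σ^obs_{a|x} = Σ_γ δ_{a,γ(x)} ζ^γ, i.e. {σ^obs_{a|x}} admits a local-hidden-state model with hidden states {ζ^γ}. -/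
open scoped BigOperators ComplexOrder

lemma aux_trace_conjTranspose_mul_self (k : ℕ) (B : Matrix (Fin k) (Fin k) ℂ) :
    (B.conjTranspose * B).trace = ∑ j, ∑ i, star (B i j) * B i j := by
  simp [Matrix.trace, Matrix.mul_apply, Matrix.diag, Matrix.conjTranspose_apply]

lemma aux_trace_nonneg {k : ℕ} {A : Matrix (Fin k) (Fin k) ℂ} (hA : A.PosSemidef) :
    0 ≤ A.trace := by
  obtain ⟨B, rfl⟩ : ∃ B : Matrix (Fin k) (Fin k) ℂ, A = B.conjTranspose * B := by
    open scoped MatrixOrder in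
    exact CStarAlgebra.nonneg_iff_eq_star_mul_self.mp hA.nonneg
  rw [aux_trace_conjTranspose_mul_self]
  exact Finset.sum_nonneg fun j _ => Finset.sum_nonneg fun i _ => star_mul_self_nonneg _

lemma aux_eq_zero_of_trace_eq_zero {k : ℕ} {A : Matrix (Fin k) (Fin k) ℂ}
    (hA : A.PosSemidef) (h : A.trace = 0) : A = 0 := by
  obtain ⟨B, rfl⟩ : ∃ B : Matrix (Fin k) (Fin k) ℂ, A = B.conjTranspose * B := by
    open scoped MatrixOrder in
    exact CStarAlgebra.nonneg_iff_eq_star_mul_self.mp hA.nonneg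
  rw [aux_trace_conjTranspose_mul_self] at h
  have hB : B = 0 := by
    ext i j
    have h1 : ∀ j ∈ Finset.univ, (0:ℂ) ≤ ∑ i, star (B i j) * B i j :=
      fun j _ => Finset.sum_nonneg fun i _ => star_mul_self_nonneg _
    have h2 := (Finset.sum_eq_zero_iff_of_nonneg h1).mp h j (Finset.mem_univ j)
    have h3 := (Finset.sum_eq_zero_iff_of_nonneg
      (fun i (_ : i ∈ Finset.univ) => star_mul_self_nonneg (B i j))).mp h2 i (Finset.mem_univ i)
    rcases mul_eq_zero.mp h3 with h4 | h4
    · exact star_eq_zero.mp h4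
    · exact h4
  simp [hB]

/-- if Eve's decomposition `{ξ^γ_{a|x}}` (indexed by strings
`γ : {1,...,m} → ℤ_d`) of an assemblage guesses all `m` inputs perfectly, then the
assemblage is unsteerable: the operators `ζ^γ := ξ^γ_{γ(x)|x}` are independent of `x`,
positive semidefinite, have total trace 1, and provide a local-hidden-state model
`σ^obs_{a|x} = Σ_γ δ_{a,γ(x)} ζ^γ`. -/
theorem all_input_perfect_guess_implies_unsteerable
    (d m n : ℕ) [NeZero d] [NeZero m]
    (σ : ZMod d → Fin m → Matrix (Fin n) (Fin n) ℂ)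
    (hσtr : ∀ x, (∑ a : ZMod d, σ a x).trace = 1)
    (ξ : (Fin m → ZMod d) → ZMod d → Fin m → Matrix (Fin n) (Fin n) ℂ)
    (hpsd : ∀ γ a x, (ξ γ a x).PosSemidef)
    (hdec : ∀ a x, ∑ γ : Fin m → ZMod d, ξ γ a x = σ a x)
    (hns : ∀ γ x x', ∑ a : ZMod d, ξ γ a x = ∑ a : ZMod d, ξ γ a x')
    (hguess : ∀ x : Fin m, ∑ γ : Fin m → ZMod d, (ξ γ (γ x) x).trace = 1) :
    ∃ ζ : (Fin m → ZMod d) → Matrix (Fin n) (Fin n) ℂ,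
      (∀ γ, (ζ γ).PosSemidef) ∧
      (∑ γ : Fin m → ZMod d, (ζ γ).trace = 1) ∧
      (∀ γ x, ζ γ = ξ γ (γ x) x) ∧
      (∀ a x, σ a x = ∑ γ : Fin m → ZMod d, if a = γ x then ζ γ else 0) := by
  -- off-guess components vanish
  have hzero : ∀ γ a x, a ≠ γ x → ξ γ a x = 0 := by
    intro γ a x hax
    -- total trace at x equals 1
    have htot : ∑ γ : Fin m → ZMod d, ∑ a : ZMod d, (ξ γ a x).trace = 1 := by
      rw [Finset.sum_comm]
      calc ∑ a : ZMod d, ∑ γ : Fin m → ZMod d, (ξ γ a x).trace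
          = ∑ a : ZMod d, (σ a x).trace := by
            refine Finset.sum_congr rfl fun a _ => ?_
            rw [← hdec a x, Matrix.trace_sum]
        _ = 1 := by rw [← Matrix.trace_sum]; exact hσtr x
    -- split off the guessed component
    have hsplit : ∀ γ' : Fin m → ZMod d,
        ∑ a : ZMod d, (ξ γ' a x).trace
          = (ξ γ' (γ' x) x).trace + ∑ a ∈ Finset.univ.erase (γ' x), (ξ γ' a x).trace := by
      intro γ'
      rw [← Finset.add_sum_erase _ _ (Finset.mem_univ (γ' x))]
    have hrest : ∑ γ' : Fin m → ZMod d,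
        ∑ a ∈ Finset.univ.erase (γ' x), (ξ γ' a x).trace = 0 := by
      have := htot
      simp_rw [hsplit, Finset.sum_add_distrib, hguess x] at this
      linear_combination this
    have hnn : ∀ γ' ∈ (Finset.univ : Finset (Fin m → ZMod d)),
        (0:ℂ) ≤ ∑ a ∈ Finset.univ.erase (γ' x), (ξ γ' a x).trace :=
      fun γ' _ => Finset.sum_nonneg fun a _ => aux_trace_nonneg (hpsd γ' a x)
    have h1 := (Finset.sum_eq_zero_iff_of_nonneg hnn).mp hrest γ (Finset.mem_univ γ)
    have h2 := (Finset.sum_eq_zero_iff_of_nonneg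
      (fun a (_ : a ∈ Finset.univ.erase (γ x)) => aux_trace_nonneg (hpsd γ a x))).mp h1
      a (Finset.mem_erase.mpr ⟨hax, Finset.mem_univ a⟩)
    exact aux_eq_zero_of_trace_eq_zero (hpsd γ a x) h2
  -- the sum over a is just the guessed component
  have hsum : ∀ γ x, ∑ a : ZMod d, ξ γ a x = ξ γ (γ x) x := by
    intro γ x
    rw [← Finset.add_sum_erase _ _ (Finset.mem_univ (γ x))]
    rw [Finset.sum_eq_zero fun a ha => hzero γ a x (Finset.mem_erase.mp ha).1, add_zero]
  have x0 : Fin m := ⟨0, Nat.pos_of_ne_zero (NeZero.ne m)⟩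
  refine ⟨fun γ => ξ γ (γ x0) x0, fun γ => hpsd γ (γ x0) x0, hguess x0, ?_, ?_⟩
  · intro γ x
    show ξ γ (γ x0) x0 = ξ γ (γ x) x
    rw [← hsum γ x0, hns γ x0 x, hsum γ x]
  · intro a x
    rw [← hdec a x]
    refine Finset.sum_congr rfl fun γ _ => ?_
    by_cases h : a = γ x
    · rw [if_pos h, h]
      show ξ γ (γ x) x = ξ γ (γ x0) x0
      rw [← hsum γ x0, hns γ x0 x, hsum γ x]
    · rw [if_neg h, hzero γ a x h]
end
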